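/- Let F(b) = −(γ/2)(b − q̄)² + p(b − q̄) − p·b + p₂·(b − q̄ + p₂/(2γ) + θ̄)²/(4θ̄) (up to an additive constant independent of b), γ, p, p₂, θ̄ > 0. If p₂ < γ·2θ̄, F is strictly concave and its stationary point is b* = q̄ − p₂/(2γ) + 2p₂θ̄/(2θ̄γ − p₂); moreover b* lies in [q̄ − θ̄ − p₂/(2γ), q̄ + θ̄ − p₂/(2γ)] if and only if p₂ ≤ (2/3)θ̄γ (for p₂ ≥ 0). -/

import Mathlib

lemma quad_hasDerivAt (a b c x : ℝ) :
    HasDerivAt (fun x : ℝ => a*x^2 + b*x + c) (2*a*x + b) x := by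
  have h1 : HasDerivAt (fun x : ℝ => x^2) (2*x) x := by
    simpa using hasDerivAt_pow 2 x
  have h2 := (h1.const_mul a).add (((hasDerivAt_id x).const_mul b).add_const c)
  refine (h2.congr_deriv (by ring : a*(2*x) + b*1 = 2*a*x + b)).congr_of_eventuallyEq
    (Filter.Eventually.of_forall fun y => ?_)
  simp only [Pi.add_apply, id]; ring

lemma quad_strictConcave (a b c : ℝ) (ha : a < 0) :
    StrictConcaveOn ℝ Set.univ (fun x : ℝ => a*x^2 + b*x + c) := by
  refine ⟨convex_univ, ?_⟩
  intro x _ y _ hxy s t hs ht hst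
  simp only [smul_eq_mul]
  have hxy2 : 0 < (x - y)^2 := by
    have : x - y ≠ 0 := sub_ne_zero.mpr hxy
    positivity
  have ht' : t = 1 - s := by linarith
  subst ht'
  nlinarith [mul_pos (mul_pos hs ht) hxy2, ha]

theorem stmt7 (γ p p₂ qbar θb : ℝ) (hγ : 0 < γ) (hp : 0 < p) (hp₂ : 0 < p₂)
    (hθb : 0 < θb) (hreg : p₂ < γ*(2*θb))
    (F : ℝ → ℝ)
    (hF : ∀ b, F b = -(γ/2)*(b - qbar)^2 + p*(b - qbar) - p*b
        + p₂*(b - qbar + p₂/(2*γ) + θb)^2/(4*θb))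
    (bstar : ℝ)
    (hbstar : bstar = qbar - p₂/(2*γ) + 2*p₂*θb/(2*θb*γ - p₂)) :
    StrictConcaveOn ℝ Set.univ F ∧
    deriv F bstar = 0 ∧
    (bstar ∈ Set.Icc (qbar - θb - p₂/(2*γ)) (qbar + θb - p₂/(2*γ)) ↔
      p₂ ≤ (2/3)*θb*γ) := by
  have hγ' : γ ≠ 0 := ne_of_gt hγ
  have hθ' : θb ≠ 0 := ne_of_gt hθb
  have hD : (0:ℝ) < 2*θb*γ - p₂ := by nlinarith
  have hD' : 2*θb*γ - p₂ ≠ 0 := ne_of_gt hD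
  set A := -(γ/2) + p₂/(4*θb) with hAdef
  set B := γ*qbar + p₂*(-qbar + p₂/(2*γ) + θb)/(2*θb) with hBdef
  set C := -(γ/2)*qbar^2 - p*qbar + p₂*(-qbar + p₂/(2*γ) + θb)^2/(4*θb) with hCdef
  have hFeq : F = fun x : ℝ => A*x^2 + B*x + C := by
    funext b
    rw [hF, hAdef, hBdef, hCdef]
    field_simp
    ring
  have hA : A < 0 := by
    have h1 : p₂/(4*θb) < γ/2 := by
      rw [div_lt_iff₀ (by positivity)]
      nlinarith
    rw [hAdef]; linarith
  refine ⟨?_, ?_, ?_⟩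
  · rw [hFeq]; exact quad_strictConcave A B C hA
  · rw [hFeq, (quad_hasDerivAt A B C bstar).deriv, hbstar, hAdef, hBdef]
    field_simp [ne_of_gt (by linarith : (0:ℝ) < 2*γ*θb - p₂)]
    ring
  · have hd : 0 < 2*p₂*θb/(2*θb*γ - p₂) := by positivity
    constructor
    · rintro ⟨h1, h2⟩
      rw [hbstar] at h2
      have h3 : 2*p₂*θb/(2*θb*γ - p₂) ≤ θb := by linarith
      rw [div_le_iff₀ hD] at h3
      nlinarith
    · intro h
      rw [hbstar]
      constructor
      · nlinarith
      · have h3 : 2*p₂*θb/(2*θb*γ - p₂) ≤ θb := by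
          rw [div_le_iff₀ hD]; nlinarith
        linarith
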